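/- Let X be a finite set, d : X × X → ℝ≥0 a metric (satisfying d(x,x)=0, symmetry, and the triangle inequality), and λ_d, λ_c : X → ℝ≥0 functions satisfying λ_d(x) ≤ d(x,y) + λ_d(y) and λ_c(y) ≤ λ_c(x) + d(x,y) for all x, y. Define GKR(μ, ν) = min over sub-couplings π of Σ_{x,y} d(x,y)π(x,y) + Σ_x λ_d(x)(μ(x) − Σ_y π(x,y)) + Σ_y λ_c(y)(ν(y) − Σ_x π(x,y)). Then GKR satisfies the triangle inequality: GKR(μ, η) ≤ GKR(μ, ν) + GKR(ν, η) for all μ, ν, η : X → ℝ≥0. -/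

import Mathlib

open Finset

variable {X : Type*}

def IsSubcoupling [Fintype X] (μ ν : X → ℝ) (π : X → X → ℝ) : Prop :=
  (∀ x y, 0 ≤ π x y) ∧ (∀ x, ∑ y, π x y ≤ μ x) ∧ (∀ y, ∑ x, π x y ≤ ν y)

def GKRcost [Fintype X] (c : X → X → ℝ) (lamd lamc : X → ℝ) (μ ν : X → ℝ)
    (π : X → X → ℝ) : ℝ :=
  (∑ x, ∑ y, c x y * π x y) + (∑ x, lamd x * (μ x - ∑ y, π x y))
    + (∑ y, lamc y * (ν y - ∑ x, π x y))

noncomputable def GKR [Fintype X] (c : X → X → ℝ) (lamd lamc : X → ℝ) (μ ν : X → ℝ) : ℝ :=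
  sInf {v : ℝ | ∃ π : X → X → ℝ, IsSubcoupling μ ν π ∧ v = GKRcost c lamd lamc μ ν π}

noncomputable def OTC [Fintype X] (c : X → X → ℝ) (μ ν : X → ℝ) : ℝ :=
  sInf {v : ℝ | ∃ π : X → X → ℝ, (∀ x y, 0 ≤ π x y) ∧ (∀ x, ∑ y, π x y = μ x) ∧
    (∀ y, ∑ x, π x y = ν y) ∧ v = ∑ x, ∑ y, c x y * π x y}

lemma compose_le [Fintype X] (d : X → X → ℝ) (lamd lamc : X → ℝ)
    (hdnn : ∀ x y, 0 ≤ d x y)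
    (hdtri : ∀ x y z, d x z ≤ d x y + d y z)
    (hld : ∀ x, 0 ≤ lamd x) (hlc : ∀ x, 0 ≤ lamc x)
    (hcompatd : ∀ x y, lamd x ≤ d x y + lamd y)
    (hcompatc : ∀ x y, lamc y ≤ lamc x + d x y)
    (μ ν η : X → ℝ)
    (π₁ π₂ : X → X → ℝ) (h1 : IsSubcoupling μ ν π₁) (h2 : IsSubcoupling ν η π₂) :
    ∃ π : X → X → ℝ, IsSubcoupling μ η π ∧
      GKRcost d lamd lamc μ η π ≤
        GKRcost d lamd lamc μ ν π₁ + GKRcost d lamd lamc ν η π₂ := by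
  classical
  obtain ⟨h1n, h1r, h1c⟩ := h1
  obtain ⟨h2n, h2r, h2c⟩ := h2
  -- column sums of π₁ and row sums of π₂
  set c1 : X → ℝ := fun y => ∑ x, π₁ x y with hc1def
  set r2 : X → ℝ := fun y => ∑ z, π₂ y z with hr2def
  set w : X → ℝ := fun y =>
    if c1 y * r2 y = 0 then 0 else min (c1 y) (r2 y) / (c1 y * r2 y) with hwdef
  have hc1nn : ∀ y, 0 ≤ c1 y := fun y => Finset.sum_nonneg fun x _ => h1n x y
  have hr2nn : ∀ y, 0 ≤ r2 y := fun y => Finset.sum_nonneg fun z _ => h2n y z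
  have hc1ν : ∀ y, c1 y ≤ ν y := fun y => h1c y
  have hr2ν : ∀ y, r2 y ≤ ν y := fun y => h2r y
  have hwnn : ∀ y, 0 ≤ w y := by
    intro y
    simp only [hwdef]
    split_ifs with h
    · exact le_rfl
    · exact div_nonneg (le_min (hc1nn y) (hr2nn y)) (mul_nonneg (hc1nn y) (hr2nn y))
  have hkey1 : ∀ y, c1 y * (r2 y * w y) = min (c1 y) (r2 y) := by
    intro y
    simp only [hwdef]
    split_ifs with h
    · rcases mul_eq_zero.mp h with h' | h'
      · rw [h']; simp [min_eq_left (hr2nn y)]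
      · rw [h']; simp [min_eq_right (hc1nn y)]
    · field_simp
      field_simp [left_ne_zero_of_mul h, right_ne_zero_of_mul h]
  have hkey2 : ∀ y, r2 y * (c1 y * w y) = min (c1 y) (r2 y) := by
    intro y; rw [← hkey1 y]; ring
  have har1 : ∀ y, r2 y * w y ≤ 1 := by
    intro y
    rcases eq_or_lt_of_le (hc1nn y) with h | h
    · have hw0 : w y = 0 := by simp [hwdef, ← h]
      simp [hw0]
    · have h2' : c1 y * (r2 y * w y) ≤ c1 y * 1 := by
        rw [hkey1 y, mul_one]; exact min_le_left _ _
      exact le_of_mul_le_mul_left h2' h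
  have hbr1 : ∀ y, c1 y * w y ≤ 1 := by
    intro y
    rcases eq_or_lt_of_le (hr2nn y) with h | h
    · have hw0 : w y = 0 := by simp [hwdef, ← h]
      simp [hw0]
    · have h2' : r2 y * (c1 y * w y) ≤ r2 y * 1 := by
        rw [hkey2 y, mul_one]; exact min_le_right _ _
      exact le_of_mul_le_mul_left h2' h
  -- marginal computations
  have hrow : ∀ x, ∑ z, (∑ y, π₁ x y * w y * π₂ y z) = ∑ y, π₁ x y * (r2 y * w y) := by
    intro x
    rw [Finset.sum_comm]
    refine Finset.sum_congr rfl fun y _ => ?_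
    rw [← Finset.mul_sum]
    show π₁ x y * w y * r2 y = _
    ring
  have hcol : ∀ z, ∑ x, (∑ y, π₁ x y * w y * π₂ y z) = ∑ y, (c1 y * w y) * π₂ y z := by
    intro z
    rw [Finset.sum_comm]
    refine Finset.sum_congr rfl fun y _ => ?_
    have h' : ∑ x, π₁ x y * w y * π₂ y z = (∑ x, π₁ x y) * (w y * π₂ y z) := by
      rw [Finset.sum_mul]
      exact Finset.sum_congr rfl fun x _ => by ring
    rw [h']
    show c1 y * (w y * π₂ y z) = _
    ring
  refine ⟨fun x z => ∑ y, π₁ x y * w y * π₂ y z, ?_, ?_⟩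
  · refine ⟨fun x z => Finset.sum_nonneg fun y _ =>
      mul_nonneg (mul_nonneg (h1n x y) (hwnn y)) (h2n y z), ?_, ?_⟩
    · intro x
      rw [hrow x]
      calc ∑ y, π₁ x y * (r2 y * w y) ≤ ∑ y, π₁ x y * 1 :=
            Finset.sum_le_sum fun y _ => mul_le_mul_of_nonneg_left (har1 y) (h1n x y)
        _ = ∑ y, π₁ x y := by simp
        _ ≤ μ x := h1r x
    · intro z
      rw [hcol z]
      calc ∑ y, (c1 y * w y) * π₂ y z ≤ ∑ y, 1 * π₂ y z :=
            Finset.sum_le_sum fun y _ => mul_le_mul_of_nonneg_right (hbr1 y) (h2n y z)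
        _ = ∑ y, π₂ y z := by simp
        _ ≤ η z := h2c z
  -- the cost inequality
  · have hA : (∑ x, ∑ z, d x z * ∑ y, π₁ x y * w y * π₂ y z)
        ≤ (∑ y, ∑ x, d x y * (π₁ x y * (r2 y * w y)))
          + (∑ y, ∑ z, d y z * (π₂ y z * (c1 y * w y))) := by
      have step1 : (∑ x, ∑ z, d x z * ∑ y, π₁ x y * w y * π₂ y z)
          = ∑ x, ∑ z, ∑ y, d x z * (π₁ x y * w y * π₂ y z) := by
        refine Finset.sum_congr rfl fun x _ => Finset.sum_congr rfl fun z _ => ?_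
        rw [Finset.mul_sum]
      rw [step1]
      have step2 : (∑ x, ∑ z, ∑ y, d x z * (π₁ x y * w y * π₂ y z))
          ≤ ∑ x, ∑ z, ∑ y, (d x y + d y z) * (π₁ x y * w y * π₂ y z) := by
        refine Finset.sum_le_sum fun x _ => Finset.sum_le_sum fun z _ =>
          Finset.sum_le_sum fun y _ => ?_
        exact mul_le_mul_of_nonneg_right (hdtri x y z)
          (mul_nonneg (mul_nonneg (h1n x y) (hwnn y)) (h2n y z))
      refine step2.trans_eq ?_
      have split : (∑ x, ∑ z, ∑ y, (d x y + d y z) * (π₁ x y * w y * π₂ y z))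
          = (∑ x, ∑ z, ∑ y, d x y * (π₁ x y * w y * π₂ y z))
            + (∑ x, ∑ z, ∑ y, d y z * (π₁ x y * w y * π₂ y z)) := by
        simp only [add_mul, Finset.sum_add_distrib]
      rw [split]
      have E1 : (∑ x, ∑ z, ∑ y, d x y * (π₁ x y * w y * π₂ y z))
          = ∑ y, ∑ x, d x y * (π₁ x y * (r2 y * w y)) := by
        have hx : ∀ x, ∑ z, ∑ y, d x y * (π₁ x y * w y * π₂ y z)
            = ∑ y, d x y * (π₁ x y * (r2 y * w y)) := by
          intro x
          rw [Finset.sum_comm]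
          refine Finset.sum_congr rfl fun y _ => ?_
          have h' : ∑ z, d x y * (π₁ x y * w y * π₂ y z)
              = (d x y * (π₁ x y * w y)) * ∑ z, π₂ y z := by
            rw [Finset.mul_sum]
            exact Finset.sum_congr rfl fun z _ => by ring
          rw [h']
          show d x y * (π₁ x y * w y) * r2 y = _
          ring
        rw [Finset.sum_congr rfl fun x _ => hx x, Finset.sum_comm]
      have E2 : (∑ x, ∑ z, ∑ y, d y z * (π₁ x y * w y * π₂ y z))
          = ∑ y, ∑ z, d y z * (π₂ y z * (c1 y * w y)) := by
        have hz : ∀ z, ∑ x, ∑ y, d y z * (π₁ x y * w y * π₂ y z)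
            = ∑ y, d y z * (π₂ y z * (c1 y * w y)) := by
          intro z
          rw [Finset.sum_comm]
          refine Finset.sum_congr rfl fun y _ => ?_
          have h' : ∑ x, d y z * (π₁ x y * w y * π₂ y z)
              = (∑ x, π₁ x y) * (d y z * (w y * π₂ y z)) := by
            rw [Finset.sum_mul]
            exact Finset.sum_congr rfl fun x _ => by ring
          rw [h']
          show c1 y * (d y z * (w y * π₂ y z)) = _
          ring
        calc (∑ x, ∑ z, ∑ y, d y z * (π₁ x y * w y * π₂ y z))
            = ∑ z, ∑ x, ∑ y, d y z * (π₁ x y * w y * π₂ y z) := Finset.sum_comm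
          _ = ∑ z, ∑ y, d y z * (π₂ y z * (c1 y * w y)) :=
              Finset.sum_congr rfl fun z _ => hz z
          _ = ∑ y, ∑ z, d y z * (π₂ y z * (c1 y * w y)) := Finset.sum_comm
      rw [E1, E2]
    have hF : ∀ y, 0 ≤ (∑ x, (d x y - lamd x) * (π₁ x y * (1 - r2 y * w y)))
        + (∑ z, (d y z - lamc z) * (π₂ y z * (1 - c1 y * w y)))
        + lamc y * (ν y - c1 y) + lamd y * (ν y - r2 y) := by
      intro y
      have t1 : (∑ x, (-lamd y) * (π₁ x y * (1 - r2 y * w y)))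
          ≤ ∑ x, (d x y - lamd x) * (π₁ x y * (1 - r2 y * w y)) :=
        Finset.sum_le_sum fun x _ => mul_le_mul_of_nonneg_right
          (by linarith [hcompatd x y]) (mul_nonneg (h1n x y) (by linarith [har1 y]))
      have t1' : (∑ x, (-lamd y) * (π₁ x y * (1 - r2 y * w y)))
          = -lamd y * (c1 y - min (c1 y) (r2 y)) := by
        rw [← Finset.mul_sum, ← Finset.sum_mul]
        have h' : c1 y * (1 - r2 y * w y) = c1 y - min (c1 y) (r2 y) := by
          rw [← hkey1 y]; ring
        show -lamd y * (c1 y * (1 - r2 y * w y)) = _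
        rw [h']
      have t2 : (∑ z, (-lamc y) * (π₂ y z * (1 - c1 y * w y)))
          ≤ ∑ z, (d y z - lamc z) * (π₂ y z * (1 - c1 y * w y)) :=
        Finset.sum_le_sum fun z _ => mul_le_mul_of_nonneg_right
          (by linarith [hcompatc y z]) (mul_nonneg (h2n y z) (by linarith [hbr1 y]))
      have t2' : (∑ z, (-lamc y) * (π₂ y z * (1 - c1 y * w y)))
          = -lamc y * (r2 y - min (c1 y) (r2 y)) := by
        rw [← Finset.mul_sum, ← Finset.sum_mul]
        have h' : r2 y * (1 - c1 y * w y) = r2 y - min (c1 y) (r2 y) := by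
          rw [← hkey2 y]; ring
        show -lamc y * (r2 y * (1 - c1 y * w y)) = _
        rw [h']
      have hmm : min (c1 y) (r2 y) + max (c1 y) (r2 y) = c1 y + r2 y :=
        min_add_max _ _
      have hmax : max (c1 y) (r2 y) ≤ ν y := max_le (hc1ν y) (hr2ν y)
      have hx1 : ν y - r2 y - (c1 y - min (c1 y) (r2 y)) = ν y - max (c1 y) (r2 y) := by
        linarith
      have hx2 : ν y - c1 y - (r2 y - min (c1 y) (r2 y)) = ν y - max (c1 y) (r2 y) := by
        linarith
      have comb1 : -lamd y * (c1 y - min (c1 y) (r2 y)) + lamd y * (ν y - r2 y)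
          = lamd y * (ν y - max (c1 y) (r2 y)) := by
        rw [← hx1]; ring
      have comb2 : -lamc y * (r2 y - min (c1 y) (r2 y)) + lamc y * (ν y - c1 y)
          = lamc y * (ν y - max (c1 y) (r2 y)) := by
        rw [← hx2]; ring
      have p1 : 0 ≤ lamd y * (ν y - max (c1 y) (r2 y)) :=
        mul_nonneg (hld y) (by linarith)
      have p2 : 0 ≤ lamc y * (ν y - max (c1 y) (r2 y)) :=
        mul_nonneg (hlc y) (by linarith)
      linarith [t1, t1', t2, t2', comb1, comb2, p1, p2]
    have hexp : ∀ y, (∑ x, (d x y - lamd x) * (π₁ x y * (1 - r2 y * w y)))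
        + (∑ z, (d y z - lamc z) * (π₂ y z * (1 - c1 y * w y)))
        + lamc y * (ν y - c1 y) + lamd y * (ν y - r2 y)
        = ((∑ x, d x y * π₁ x y) - (∑ x, lamd x * π₁ x y)
            - (∑ x, d x y * (π₁ x y * (r2 y * w y)))
            + (∑ x, lamd x * (π₁ x y * (r2 y * w y))))
          + ((∑ z, d y z * π₂ y z) - (∑ z, lamc z * π₂ y z)
            - (∑ z, d y z * (π₂ y z * (c1 y * w y)))
            + (∑ z, lamc z * (π₂ y z * (c1 y * w y))))
          + lamc y * (ν y - c1 y) + lamd y * (ν y - r2 y) := by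
      intro y
      have e1 : (∑ x, (d x y - lamd x) * (π₁ x y * (1 - r2 y * w y)))
          = ∑ x, (d x y * π₁ x y - lamd x * π₁ x y
              - d x y * (π₁ x y * (r2 y * w y)) + lamd x * (π₁ x y * (r2 y * w y))) :=
        Finset.sum_congr rfl fun x _ => by ring
      have e2 : (∑ z, (d y z - lamc z) * (π₂ y z * (1 - c1 y * w y)))
          = ∑ z, (d y z * π₂ y z - lamc z * π₂ y z
              - d y z * (π₂ y z * (c1 y * w y)) + lamc z * (π₂ y z * (c1 y * w y))) :=
        Finset.sum_congr rfl fun z _ => by ring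
      rw [e1, e2]
      simp only [Finset.sum_add_distrib, Finset.sum_sub_distrib]
    have hFsum : (0:ℝ) ≤
        ((∑ y, ∑ x, d x y * π₁ x y) - (∑ y, ∑ x, lamd x * π₁ x y)
          - (∑ y, ∑ x, d x y * (π₁ x y * (r2 y * w y)))
          + (∑ y, ∑ x, lamd x * (π₁ x y * (r2 y * w y))))
        + ((∑ y, ∑ z, d y z * π₂ y z) - (∑ y, ∑ z, lamc z * π₂ y z)
          - (∑ y, ∑ z, d y z * (π₂ y z * (c1 y * w y)))
          + (∑ y, ∑ z, lamc z * (π₂ y z * (c1 y * w y))))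
        + (∑ y, lamc y * (ν y - c1 y)) + (∑ y, lamd y * (ν y - r2 y)) := by
      have h0 : (0:ℝ) ≤ ∑ y, ((∑ x, (d x y - lamd x) * (π₁ x y * (1 - r2 y * w y)))
          + (∑ z, (d y z - lamc z) * (π₂ y z * (1 - c1 y * w y)))
          + lamc y * (ν y - c1 y) + lamd y * (ν y - r2 y)) :=
        Finset.sum_nonneg fun y _ => hF y
      rw [Finset.sum_congr rfl fun y _ => hexp y] at h0
      simpa only [Finset.sum_add_distrib, Finset.sum_sub_distrib] using h0
    have bridge1 : (∑ y, ∑ x, d x y * π₁ x y) = ∑ x, ∑ y, d x y * π₁ x y :=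
      Finset.sum_comm
    have bridge2 : (∑ x, lamd x * (μ x - ∑ y, π₁ x y))
        = (∑ x, lamd x * μ x) - ∑ y, ∑ x, lamd x * π₁ x y := by
      have h' : (∑ x, lamd x * (μ x - ∑ y, π₁ x y))
          = ∑ x, (lamd x * μ x - ∑ y, lamd x * π₁ x y) :=
        Finset.sum_congr rfl fun x _ => by rw [mul_sub, Finset.mul_sum]
      rw [h', Finset.sum_sub_distrib, Finset.sum_comm]
    have bridge3 : (∑ x, lamd x * (μ x - ∑ y, π₁ x y * (r2 y * w y)))
        = (∑ x, lamd x * μ x) - ∑ y, ∑ x, lamd x * (π₁ x y * (r2 y * w y)) := by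
      have h' : (∑ x, lamd x * (μ x - ∑ y, π₁ x y * (r2 y * w y)))
          = ∑ x, (lamd x * μ x - ∑ y, lamd x * (π₁ x y * (r2 y * w y))) :=
        Finset.sum_congr rfl fun x _ => by rw [mul_sub, Finset.mul_sum]
      rw [h', Finset.sum_sub_distrib, Finset.sum_comm]
    have bridge4 : (∑ z, lamc z * (η z - ∑ y, π₂ y z))
        = (∑ z, lamc z * η z) - ∑ y, ∑ z, lamc z * π₂ y z := by
      have h' : (∑ z, lamc z * (η z - ∑ y, π₂ y z))
          = ∑ z, (lamc z * η z - ∑ y, lamc z * π₂ y z) :=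
        Finset.sum_congr rfl fun z _ => by rw [mul_sub, Finset.mul_sum]
      rw [h', Finset.sum_sub_distrib, Finset.sum_comm]
    have bridge5 : (∑ z, lamc z * (η z - ∑ y, (c1 y * w y) * π₂ y z))
        = (∑ z, lamc z * η z) - ∑ y, ∑ z, lamc z * (π₂ y z * (c1 y * w y)) := by
      have h' : (∑ z, lamc z * (η z - ∑ y, (c1 y * w y) * π₂ y z))
          = ∑ z, (lamc z * η z - ∑ y, lamc z * (π₂ y z * (c1 y * w y))) := by
        refine Finset.sum_congr rfl fun z _ => ?_
        rw [mul_sub, Finset.mul_sum]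
        congr 1
        exact Finset.sum_congr rfl fun y _ => by ring
      rw [h', Finset.sum_sub_distrib, Finset.sum_comm]
    have bridge6 : (∑ y, ∑ z, d y z * π₂ y z) = ∑ x, ∑ y, d x y * π₂ x y := rfl
    have bridge7 : (∑ y, lamd y * (ν y - r2 y)) = ∑ x, lamd x * (ν x - ∑ y, π₂ x y) := rfl
    have hC1 : GKRcost d lamd lamc μ ν π₁
        = (∑ x, ∑ y, d x y * π₁ x y) + (∑ x, lamd x * (μ x - ∑ y, π₁ x y))
          + (∑ y, lamc y * (ν y - c1 y)) := rfl
    have hC2 : GKRcost d lamd lamc ν η π₂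
        = (∑ x, ∑ y, d x y * π₂ x y) + (∑ x, lamd x * (ν x - ∑ y, π₂ x y))
          + (∑ z, lamc z * (η z - ∑ y, π₂ y z)) := rfl
    have b2 : (∑ x, lamd x * (μ x - ∑ z, ∑ y, π₁ x y * w y * π₂ y z))
        = ∑ x, lamd x * (μ x - ∑ y, π₁ x y * (r2 y * w y)) :=
      Finset.sum_congr rfl fun x _ => by rw [hrow x]
    have b3 : (∑ z, lamc z * (η z - ∑ x, ∑ y, π₁ x y * w y * π₂ y z))
        = ∑ z, lamc z * (η z - ∑ y, (c1 y * w y) * π₂ y z) :=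
      Finset.sum_congr rfl fun z _ => by rw [hcol z]
    have hLHS : GKRcost d lamd lamc μ η (fun x z => ∑ y, π₁ x y * w y * π₂ y z)
        = (∑ x, ∑ z, d x z * ∑ y, π₁ x y * w y * π₂ y z)
          + (∑ x, lamd x * (μ x - ∑ y, π₁ x y * (r2 y * w y)))
          + (∑ z, lamc z * (η z - ∑ y, (c1 y * w y) * π₂ y z)) := by
      simp only [GKRcost]
      rw [b2, b3]
    rw [hLHS, hC1, hC2]
    linarith [hA, hFsum, bridge1, bridge2, bridge3, bridge4, bridge5, bridge6, bridge7]

theorem stmt3 [Fintype X] (d : X → X → ℝ) (lamd lamc : X → ℝ)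
    (hdnn : ∀ x y, 0 ≤ d x y) (hd0 : ∀ x, d x x = 0)
    (hdsymm : ∀ x y, d x y = d y x)
    (hdtri : ∀ x y z, d x z ≤ d x y + d y z)
    (hld : ∀ x, 0 ≤ lamd x) (hlc : ∀ x, 0 ≤ lamc x)
    (hcompatd : ∀ x y, lamd x ≤ d x y + lamd y)
    (hcompatc : ∀ x y, lamc y ≤ lamc x + d x y)
    (μ ν η : X → ℝ) (hμ : ∀ x, 0 ≤ μ x) (hν : ∀ x, 0 ≤ ν x) (hη : ∀ x, 0 ≤ η x) :
    GKR d lamd lamc μ η ≤ GKR d lamd lamc μ ν + GKR d lamd lamc ν η := by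
  classical
  have hcost : ∀ (α β : X → ℝ) (π : X → X → ℝ), IsSubcoupling α β π →
      0 ≤ GKRcost d lamd lamc α β π := by
    rintro α β π ⟨hn, hr, hc⟩
    have t1 : (0:ℝ) ≤ ∑ x, ∑ y, d x y * π x y :=
      Finset.sum_nonneg fun x _ => Finset.sum_nonneg fun y _ =>
        mul_nonneg (hdnn x y) (hn x y)
    have t2 : (0:ℝ) ≤ ∑ x, lamd x * (α x - ∑ y, π x y) :=
      Finset.sum_nonneg fun x _ => mul_nonneg (hld x) (by linarith [hr x])
    have t3 : (0:ℝ) ≤ ∑ y, lamc y * (β y - ∑ x, π x y) :=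
      Finset.sum_nonneg fun y _ => mul_nonneg (hlc y) (by linarith [hc y])
    unfold GKRcost
    linarith
  have hzero : ∀ (α β : X → ℝ), (∀ x, 0 ≤ α x) → (∀ x, 0 ≤ β x) →
      IsSubcoupling α β (fun _ _ => (0:ℝ)) := by
    intro α β hα hβ
    exact ⟨fun _ _ => le_rfl, fun x => by simpa using hα x, fun y => by simpa using hβ y⟩
  have hne : ∀ (α β : X → ℝ), (∀ x, 0 ≤ α x) → (∀ x, 0 ≤ β x) →
      Set.Nonempty {v : ℝ | ∃ π : X → X → ℝ, IsSubcoupling α β π ∧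
        v = GKRcost d lamd lamc α β π} :=
    fun α β hα hβ => ⟨_, ⟨fun _ _ => 0, hzero α β hα hβ, rfl⟩⟩
  have hbdd : ∀ (α β : X → ℝ), BddBelow {v : ℝ | ∃ π : X → X → ℝ, IsSubcoupling α β π ∧
      v = GKRcost d lamd lamc α β π} := by
    intro α β
    refine ⟨0, ?_⟩
    rintro v ⟨π, hπ, rfl⟩
    exact hcost α β π hπ
  have key : ∀ a ∈ {v : ℝ | ∃ π : X → X → ℝ, IsSubcoupling μ ν π ∧
        v = GKRcost d lamd lamc μ ν π},
      ∀ b ∈ {v : ℝ | ∃ π : X → X → ℝ, IsSubcoupling ν η π ∧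
        v = GKRcost d lamd lamc ν η π},
      GKR d lamd lamc μ η ≤ a + b := by
    rintro a ⟨π₁, h₁, rfl⟩ b ⟨π₂, h₂, rfl⟩
    obtain ⟨π, hπ, hle⟩ := compose_le d lamd lamc hdnn hdtri hld hlc hcompatd hcompatc
      μ ν η π₁ π₂ h₁ h₂
    exact le_trans (csInf_le (hbdd μ η) ⟨π, hπ, rfl⟩) hle
  have h1 : GKR d lamd lamc μ η - GKR d lamd lamc ν η ≤ GKR d lamd lamc μ ν := by
    refine le_csInf (hne μ ν hμ hν) fun a ha => ?_
    have h2 : GKR d lamd lamc μ η - a ≤ GKR d lamd lamc ν η := by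
      refine le_csInf (hne ν η hν hη) fun b hb => ?_
      have := key a ha b hb
      linarith
    linarith
  linarith
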